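/- arXiv:0706.2595 — 2 statements merged into one kernel-verified Lean document; each statement's English description precedes it below -/
import Mathlib

section
/- Let n ≥ 1 and let X, B be n×n real matrices. Then the map s ↦ exp(X + s·(XB − BX)) from ℝ to M_n(ℝ) (matrix exponential) is differentiable at s = 0, with derivative exp(X)·( B − exp(−X)·B·exp(X) ). -/
attribute [local instance] Matrix.linftyOpNormedAddCommGroup Matrix.linftyOpNormedRing
  Matrix.linftyOpNormedAlgebra

/-- Equation (36) of Appendix B §5.3 of the paper, for matrices: the map
`s ↦ exp(X + s·[X,B])` has derivative `exp(X)·(B - e^{-X}·B·e^{X})` at `s = 0`;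
i.e. `exp(X + ε[X,B]) = exp(X)·exp(ε(1 - e^{-ad X})B)` to first order in `ε`. -/
theorem hasDerivAt_exp_bracket_direction
    (n : ℕ) (hn : 1 ≤ n) (X B : Matrix (Fin n) (Fin n) ℝ) :
    HasDerivAt (fun s : ℝ => NormedSpace.exp (X + s • (X * B - B * X)))
      (NormedSpace.exp X
        * (B - NormedSpace.exp (-X) * B * NormedSpace.exp X))
      0 := by
  set C : Matrix (Fin n) (Fin n) ℝ := X * B - B * X with hC
  have hdiff : DifferentiableAt ℝ (NormedSpace.exp : Matrix (Fin n) (Fin n) ℝ → _) X :=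
    (NormedSpace.exp_analytic X).differentiableAt
  set D := fderiv ℝ (NormedSpace.exp : Matrix (Fin n) (Fin n) ℝ → _) X with hD
  have hmul : ∀ s : ℝ, NormedSpace.exp (-(s • B)) * NormedSpace.exp (s • B) = 1 := by
    intro s
    erw [← NormedSpace.exp_add_of_commute (Commute.refl (s • B)).neg_left, neg_add_cancel,
      NormedSpace.exp_zero]
  have hmul' : ∀ s : ℝ, NormedSpace.exp (s • B) * NormedSpace.exp (-(s • B)) = 1 := by
    intro s
    erw [← NormedSpace.exp_add_of_commute (Commute.refl (s • B)).neg_right, add_neg_cancel,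
      NormedSpace.exp_zero]
  have hpos : HasDerivAt (fun s : ℝ => NormedSpace.exp (s • B)) B 0 := by
    have := hasDerivAt_exp_smul_const B (0 : ℝ)
    simp at this
    exact this
  have hneg : HasDerivAt (fun s : ℝ => NormedSpace.exp (-(s • B))) (-B) 0 := by
    have := hasDerivAt_exp_smul_const (-B) (0 : ℝ)
    simp [smul_neg] at this
    exact this
  have hg : HasDerivAt
      (fun s : ℝ => NormedSpace.exp (-(s • B)) * X * NormedSpace.exp (s • B)) C 0 := by
    have := ((hneg.mul_const X).mul hpos)
    simp [hC, sub_eq_neg_add] at this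
    rw [hC, sub_eq_neg_add]
    exact this
  have hg0 : NormedSpace.exp (-((0:ℝ) • B)) * X * NormedSpace.exp ((0:ℝ) • B) = X := by
    simp
  have hh : HasDerivAt
      (fun s : ℝ => NormedSpace.exp (-(s • B)) * NormedSpace.exp X * NormedSpace.exp (s • B))
      (NormedSpace.exp X * B - B * NormedSpace.exp X) 0 := by
    have := ((hneg.mul_const (NormedSpace.exp X)).mul hpos)
    simp [sub_eq_neg_add] at this
    rw [sub_eq_neg_add]
    exact this
  have heq : ∀ s : ℝ,
      NormedSpace.exp (NormedSpace.exp (-(s • B)) * X * NormedSpace.exp (s • B))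
        = NormedSpace.exp (-(s • B)) * NormedSpace.exp X * NormedSpace.exp (s • B) := by
    intro s
    let u : (Matrix (Fin n) (Fin n) ℝ)ˣ :=
      ⟨NormedSpace.exp (-(s • B)), NormedSpace.exp (s • B), hmul s, hmul' s⟩
    exact Matrix.exp_units_conj u X
  have hcomp1 : HasDerivAt
      (fun s : ℝ => NormedSpace.exp
        (NormedSpace.exp (-(s • B)) * X * NormedSpace.exp (s • B))) (D C) 0 := by
    have hfd : HasFDerivAt (NormedSpace.exp : Matrix (Fin n) (Fin n) ℝ → _) D
        (NormedSpace.exp (-((0:ℝ) • B)) * X * NormedSpace.exp ((0:ℝ) • B)) := by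
      rw [hg0]; exact hdiff.hasFDerivAt
    exact hfd.comp_hasDerivAt 0 hg
  have hDC : D C = NormedSpace.exp X * B - B * NormedSpace.exp X := by
    have h2 : HasDerivAt
        (fun s : ℝ =>
          NormedSpace.exp (-(s • B)) * NormedSpace.exp X * NormedSpace.exp (s • B))
        (D C) 0 := by
      refine hcomp1.congr_of_eventuallyEq ?_
      filter_upwards with s using (heq s).symm
    exact h2.unique hh
  have hf : HasDerivAt (fun s : ℝ => X + s • C) C 0 := by
    have : HasDerivAt (fun s : ℝ => s • C) ((1:ℝ) • C) 0 := (hasDerivAt_id (0:ℝ)).smul_const C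
    have h1 := this.const_add X
    rw [one_smul] at h1
    exact h1
  have hmain : HasDerivAt (fun s : ℝ => NormedSpace.exp (X + s • C)) (D C) 0 := by
    have hfd : HasFDerivAt (NormedSpace.exp : Matrix (Fin n) (Fin n) ℝ → _) D
        (X + (0:ℝ) • C) := by
      simpa using hdiff.hasFDerivAt
    exact hfd.comp_hasDerivAt 0 hf
  have hXinv : NormedSpace.exp X * NormedSpace.exp (-X) = 1 := by
    erw [← NormedSpace.exp_add_of_commute (Commute.refl X).neg_right, add_neg_cancel,
      NormedSpace.exp_zero]
  have htarget : NormedSpace.exp X * (B - NormedSpace.exp (-X) * B * NormedSpace.exp X)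
      = D C := by
    rw [hDC, mul_sub]
    congr 1
    rw [← mul_assoc, ← mul_assoc, hXinv, one_mul]
  rw [htarget]
  exact hmain
end

section
/- Let X be a type, let R = FreeAlgebra ℚ X be the free associative ℚ-algebra on X with canonical embedding ι : X → R, equipped with the Lie bracket ⁅a,b⁆ = ab − ba, and let P ⊆ R be the ℚ-linear span of the image of ι. Suppose δ : R → R is a ℚ-linear map satisfying: δ(1) = 0; δ(ι(x)) = ι(x) for every x : X; and δ(ι(x)·w) = ι(x)·δ(w) − δ(w)·ι(x) for every x : X and every w belonging to ∑_{m≥1} P^m (the submodule sum of all positive powers of P, where P^m denotes the ℚ-span of products of m elements of P). Then for every integer n ≥ 1 and every w ∈ P^n: w belongs to the Lie subalgebra of R generated by the image of ι if and only if δ(w) = n·w. -/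
attribute [local instance 100] LieRing.ofAssociativeRing

/-- Auxiliary: a submodule of the free algebra closed under commutators,
viewed as a Lie subalgebra. -/
def dswCommClosed {X : Type*} (S : Submodule ℚ (FreeAlgebra ℚ X))
    (h : ∀ a ∈ S, ∀ b ∈ S, a * b - b * a ∈ S) : LieSubalgebra ℚ (FreeAlgebra ℚ X) :=
  { S with
    lie_mem' := fun {x y} hx hy => by
      have : ⁅x, y⁆ = x * y - y * x := Ring.lie_def x y
      show ⁅x, y⁆ ∈ S
      rw [this]
      exact h x hx y hy }

theorem dswCommClosed_mem {X : Type*} (S : Submodule ℚ (FreeAlgebra ℚ X))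
    (h : ∀ a ∈ S, ∀ b ∈ S, a * b - b * a ∈ S) (u : FreeAlgebra ℚ X) :
    u ∈ dswCommClosed S h ↔ u ∈ S := Iff.rfl

/-- Auxiliary: the Lie subalgebra of elements `u` of `A` satisfying the product rule
`δ(u·w) = u·δ(w) − δ(w)·u` for all `w ∈ A`. -/
def dswS {X : Type*} (δ : FreeAlgebra ℚ X →ₗ[ℚ] FreeAlgebra ℚ X)
    (A : Submodule ℚ (FreeAlgebra ℚ X))
    (hA_mul : ∀ a ∈ A, ∀ b ∈ A, a * b ∈ A) : LieSubalgebra ℚ (FreeAlgebra ℚ X) where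
  carrier := setOf (fun u => u ∈ A ∧ ∀ w ∈ A, δ (u * w) = u * δ w - δ w * u)
  add_mem' := by
    rintro a b ⟨haA, ha⟩ ⟨hbA, hb⟩
    refine ⟨add_mem haA hbA, fun w hw => ?_⟩
    rw [add_mul, map_add, ha w hw, hb w hw]
    noncomm_ring
  zero_mem' := ⟨zero_mem A, fun w hw => by simp⟩
  smul_mem' := by
    rintro c a ⟨haA, ha⟩
    refine ⟨Submodule.smul_mem A c haA, fun w hw => ?_⟩
    rw [smul_mul_assoc, map_smul, ha w hw, smul_sub, smul_mul_assoc, mul_smul_comm]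
  lie_mem' := by
    rintro u v ⟨huA, hu⟩ ⟨hvA, hv⟩
    have huv : (⁅u, v⁆ : FreeAlgebra ℚ X) = u * v - v * u := Ring.lie_def u v
    refine ⟨?_, fun w hw => ?_⟩
    · show (⁅u, v⁆ : FreeAlgebra ℚ X) ∈ A
      rw [huv]
      exact sub_mem (hA_mul u huA v hvA) (hA_mul v hvA u huA)
    · show δ (⁅u, v⁆ * w) = ⁅u, v⁆ * δ w - δ w * ⁅u, v⁆
      rw [huv, sub_mul, map_sub, mul_assoc, mul_assoc,
        hu (v * w) (hA_mul v hvA w hw), hv (u * w) (hA_mul u huA w hw),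
        hv w hw, hu w hw]
      noncomm_ring

theorem dswS_mem {X : Type*} (δ : FreeAlgebra ℚ X →ₗ[ℚ] FreeAlgebra ℚ X)
    (A : Submodule ℚ (FreeAlgebra ℚ X))
    (hA_mul : ∀ a ∈ A, ∀ b ∈ A, a * b ∈ A) (u : FreeAlgebra ℚ X) :
    u ∈ dswS δ A hA_mul ↔ u ∈ A ∧ ∀ w ∈ A, δ (u * w) = u * δ w - δ w * u := Iff.rfl

/-- The Dynkin–Specht–Wever criterion (Appendix B §5.1 of the paper, [Se] §4.4): in the
free associative `ℚ`-algebra `R` on `X` (with the commutator bracket), let `P` be the span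
of the generators and let `δ` be a linear map with `δ(1) = 0`, `δ(x) = x` for generators
`x`, and `δ(x·w) = ⁅x, δ(w)⁆` for generators `x` and `w` in the augmentation part
`∑_{m ≥ 1} Pᵐ`. Then a homogeneous element `w ∈ Pⁿ` (`n ≥ 1`) is a Lie element — i.e. lies
in the Lie subalgebra generated by the generators — if and only if `δ(w) = n·w`. -/
theorem dynkin_specht_wever (X : Type*)
    (P : Submodule ℚ (FreeAlgebra ℚ X))
    (hP : P = Submodule.span ℚ (Set.range (FreeAlgebra.ι ℚ (X := X))))
    (δ : FreeAlgebra ℚ X →ₗ[ℚ] FreeAlgebra ℚ X)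
    (hδ_one : δ 1 = 0)
    (hδ_gen : ∀ x : X, δ (FreeAlgebra.ι ℚ x) = FreeAlgebra.ι ℚ x)
    (hδ_mul : ∀ x : X, ∀ w ∈ (⨆ m : ℕ, P ^ (m + 1)),
      δ (FreeAlgebra.ι ℚ x * w)
        = FreeAlgebra.ι ℚ x * δ w - δ w * FreeAlgebra.ι ℚ x) :
    ∀ n : ℕ, 1 ≤ n → ∀ w ∈ P ^ n,
      (w ∈ LieSubalgebra.lieSpan ℚ (FreeAlgebra ℚ X) (Set.range (FreeAlgebra.ι ℚ (X := X)))
        ↔ δ w = (n : ℚ) • w) := by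
  set A : Submodule ℚ (FreeAlgebra ℚ X) := ⨆ m : ℕ, P ^ (m + 1) with hA
  set L := LieSubalgebra.lieSpan ℚ (FreeAlgebra ℚ X)
      (Set.range (FreeAlgebra.ι ℚ (X := X))) with hLdef
  have hι_mem_P : ∀ x : X, FreeAlgebra.ι ℚ x ∈ P := fun x =>
    hP ▸ Submodule.subset_span ⟨x, rfl⟩
  have hι_mem_L : ∀ x : X, FreeAlgebra.ι ℚ x ∈ L := fun x =>
    LieSubalgebra.subset_lieSpan ⟨x, rfl⟩
  have hPn_le_A : ∀ n : ℕ, 1 ≤ n → P ^ n ≤ A := by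
    intro n hn
    obtain ⟨m, rfl⟩ : ∃ m, n = m + 1 := ⟨n - 1, by omega⟩
    exact le_iSup (fun m : ℕ => P ^ (m + 1)) m
  have hι_mem_A : ∀ x : X, FreeAlgebra.ι ℚ x ∈ A := fun x =>
    hPn_le_A 1 le_rfl (by simpa [pow_one] using hι_mem_P x)
  have hA_mul : ∀ a ∈ A, ∀ b ∈ A, a * b ∈ A := by
    intro a ha b hb
    have hle : A * A ≤ A := by
      rw [hA, Submodule.iSup_mul]
      refine iSup_le fun i => ?_
      rw [Submodule.mul_iSup]
      refine iSup_le fun j => ?_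
      rw [← pow_add]
      exact hPn_le_A (i + 1 + (j + 1)) (by omega)
    exact hle (Submodule.mul_mem_mul ha hb)
  -- `A` is a Lie subalgebra, hence contains `L`
  have hL_le_A : ∀ u ∈ L, u ∈ A := by
    intro u hu
    have h' : ∀ a ∈ A, ∀ b ∈ A, a * b - b * a ∈ A := fun a ha b hb =>
      sub_mem (hA_mul a ha b hb) (hA_mul b hb a ha)
    have hle : L ≤ dswCommClosed A h' := by
      rw [hLdef]
      refine LieSubalgebra.lieSpan_le.mpr ?_
      rintro _ ⟨x, rfl⟩
      exact (dswCommClosed_mem A h' _).mpr (hι_mem_A x)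
    exact (dswCommClosed_mem A h' u).mp (hle hu)
  -- product rule for Lie elements
  have hprod : ∀ u ∈ L, ∀ w ∈ A, δ (u * w) = u * δ w - δ w * u := by
    have hle : L ≤ dswS δ A hA_mul := by
      rw [hLdef]
      refine LieSubalgebra.lieSpan_le.mpr ?_
      rintro _ ⟨x, rfl⟩
      exact (dswS_mem δ A hA_mul _).mpr ⟨hι_mem_A x, fun w hw => hδ_mul x w hw⟩
    intro u hu
    exact ((dswS_mem δ A hA_mul u).mp (hle hu)).2
  -- δ maps A into L
  have hδ_mem_L : ∀ w ∈ A, δ w ∈ L := by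
    have key : A ≤ Submodule.comap δ L.toSubmodule := by
      rw [hA]
      refine iSup_le fun m => ?_
      induction m with
      | zero =>
        rw [pow_one, hP]
        refine Submodule.span_le.mpr ?_
        rintro _ ⟨x, rfl⟩
        simpa [Submodule.mem_comap, hδ_gen x] using hι_mem_L x
      | succ m ih =>
        rw [pow_succ']
        refine Submodule.mul_le.mpr ?_
        intro p hp q hq
        rw [hP] at hp
        induction hp using Submodule.span_induction with
        | mem z hz =>
          obtain ⟨x, rfl⟩ := hz
          have hqA : q ∈ A := hPn_le_A (m + 1) (by omega) hq
          have h2 : δ q ∈ L := ih hq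
          have h3 := L.lie_mem (hι_mem_L x) h2
          rw [Ring.lie_def] at h3
          simpa [Submodule.mem_comap, hδ_mul x q hqA] using h3
        | zero => simp
        | add a b _ _ iha ihb =>
          show (a + b) * q ∈ _
          rw [add_mul]
          exact add_mem iha ihb
        | smul c a _ iha =>
          show (c • a) * q ∈ _
          rw [smul_mul_assoc]
          exact Submodule.smul_mem _ c iha
    intro w hw
    exact key hw
  -- δ is a derivation on Lie elements
  have hder : ∀ u ∈ L, ∀ v ∈ L,
      δ (u * v - v * u) = (u * δ v - δ v * u) + (δ u * v - v * δ u) := by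
    intro u hu v hv
    rw [map_sub, hprod u hu v (hL_le_A v hv), hprod v hv u (hL_le_A u hu)]
    noncomm_ring
  -- homogeneous eigen Lie elements
  set E : Set (FreeAlgebra ℚ X) :=
    setOf (fun b => b ∈ L ∧ ∃ m : ℕ, b ∈ P ^ (m + 1) ∧ δ b = ((m + 1 : ℕ) : ℚ) • b) with hE
  have hE_bracket : ∀ b ∈ E, ∀ b' ∈ E, b * b' - b' * b ∈ E := by
    rintro b ⟨hbL, m, hbP, hbδ⟩ b' ⟨hb'L, m', hb'P, hb'δ⟩
    have hLmem : b * b' - b' * b ∈ L := by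
      have h3 := L.lie_mem hbL hb'L
      rwa [Ring.lie_def] at h3
    refine ⟨hLmem, m + m' + 1, ?_, ?_⟩
    · have h1 : b * b' ∈ P ^ (m + 1) * P ^ (m' + 1) := Submodule.mul_mem_mul hbP hb'P
      have h2 : b' * b ∈ P ^ (m' + 1) * P ^ (m + 1) := Submodule.mul_mem_mul hb'P hbP
      rw [← pow_add] at h1 h2
      have e1 : m + 1 + (m' + 1) = m + m' + 1 + 1 := by omega
      have e2 : m' + 1 + (m + 1) = m + m' + 1 + 1 := by omega
      rw [e1] at h1
      rw [e2] at h2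
      exact sub_mem h1 h2
    · rw [hder b hbL b' hb'L, hbδ, hb'δ]
      simp only [mul_smul_comm, smul_mul_assoc]
      push_cast
      module
  have hgen_E : ∀ x : X, FreeAlgebra.ι ℚ x ∈ E := by
    intro x
    refine ⟨hι_mem_L x, 0, by simpa [pow_one] using hι_mem_P x, ?_⟩
    rw [hδ_gen x]
    norm_num
  have hspanE_bracket : ∀ u ∈ Submodule.span ℚ E, ∀ v ∈ Submodule.span ℚ E,
      u * v - v * u ∈ Submodule.span ℚ E := by
    intro u hu
    induction hu using Submodule.span_induction with
    | mem b hb =>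
      intro v hv
      induction hv using Submodule.span_induction with
      | mem b' hb' => exact Submodule.subset_span (hE_bracket b hb b' hb')
      | zero => simp
      | add x y _ _ ihx ihy =>
        have h4 : b * (x + y) - (x + y) * b = (b * x - x * b) + (b * y - y * b) := by
          noncomm_ring
        rw [h4]
        exact add_mem ihx ihy
      | smul c x _ ihx =>
        have h4 : b * (c • x) - (c • x) * b = c • (b * x - x * b) := by
          rw [mul_smul_comm, smul_mul_assoc, smul_sub]
        rw [h4]
        exact Submodule.smul_mem _ c ihx
    | zero => intro v hv; simp
    | add x y _ _ ihx ihy =>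
      intro v hv
      have h4 : (x + y) * v - v * (x + y) = (x * v - v * x) + (y * v - v * y) := by
        noncomm_ring
      rw [h4]
      exact add_mem (ihx v hv) (ihy v hv)
    | smul c x _ ihx =>
      intro v hv
      have h4 : (c • x) * v - v * (c • x) = c • (x * v - v * x) := by
        rw [mul_smul_comm, smul_mul_assoc, smul_sub]
      rw [h4]
      exact Submodule.smul_mem _ c (ihx v hv)
  have hL_le_spanE : ∀ w ∈ L, w ∈ Submodule.span ℚ E := by
    intro w hw
    have hle : L ≤ dswCommClosed (Submodule.span ℚ E) hspanE_bracket := by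
      rw [hLdef]
      refine LieSubalgebra.lieSpan_le.mpr ?_
      rintro _ ⟨x, rfl⟩
      exact (dswCommClosed_mem _ _ _).mpr (Submodule.subset_span (hgen_E x))
    exact (dswCommClosed_mem _ _ _).mp (hle hw)
  -- the degree projections, via polynomials
  set F : FreeAlgebra ℚ X →ₐ[ℚ] Polynomial (FreeAlgebra ℚ X) :=
    FreeAlgebra.lift ℚ (fun x => Polynomial.C (FreeAlgebra.ι ℚ x) * Polynomial.X) with hFdef
  have hF1 : ∀ p ∈ P, F p = Polynomial.C p * Polynomial.X := by
    rw [hP]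
    intro p hp
    induction hp using Submodule.span_induction with
    | mem z hz =>
      obtain ⟨x, rfl⟩ := hz
      rw [hFdef]
      exact FreeAlgebra.lift_ι_apply _ _
    | zero => simp
    | add x y _ _ ihx ihy => rw [map_add, ihx, ihy, map_add, add_mul]
    | smul c x _ ihx =>
      rw [map_smul, ihx, ← smul_mul_assoc, Polynomial.smul_C]
  have hF : ∀ m : ℕ, ∀ w ∈ P ^ m, F w = Polynomial.C w * Polynomial.X ^ m := by
    intro m
    induction m with
    | zero =>
      intro w hw
      rw [pow_zero] at hw
      obtain ⟨r, rfl⟩ := Submodule.mem_one.mp hw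
      rw [AlgHom.commutes, Polynomial.algebraMap_apply, pow_zero, mul_one]
    | succ m ih =>
      intro w hw
      rw [pow_succ'] at hw
      refine Submodule.mul_induction_on hw ?_ ?_
      · intro p hp q hq
        rw [map_mul, hF1 p hp, ih q hq]
        have hx : (Polynomial.X : Polynomial (FreeAlgebra ℚ X)) * Polynomial.C q
            = Polynomial.C q * Polynomial.X := Polynomial.X_mul
        calc Polynomial.C p * Polynomial.X * (Polynomial.C q * Polynomial.X ^ m)
            = Polynomial.C p * (Polynomial.X * Polynomial.C q) * Polynomial.X ^ m := by
              noncomm_ring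
          _ = Polynomial.C p * (Polynomial.C q * Polynomial.X) * Polynomial.X ^ m := by
              rw [hx]
          _ = Polynomial.C (p * q) * Polynomial.X ^ (m + 1) := by
              rw [Polynomial.C_mul, pow_succ']
              noncomm_ring
      · intro x y ihx ihy
        rw [map_add, ihx, ihy, Polynomial.C_add, add_mul]
  have hπadd : ∀ k : ℕ, ∀ a b : FreeAlgebra ℚ X,
      (F (a + b)).coeff k = (F a).coeff k + (F b).coeff k := by
    intro k a b; rw [map_add, Polynomial.coeff_add]
  have hπsmul : ∀ k : ℕ, ∀ (c : ℚ) (a : FreeAlgebra ℚ X),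
      (F (c • a)).coeff k = c • (F a).coeff k := by
    intro k c a; rw [map_smul, Polynomial.coeff_smul]
  set π : ℕ → (FreeAlgebra ℚ X →ₗ[ℚ] FreeAlgebra ℚ X) := fun k =>
    { toFun := fun w => (F w).coeff k,
      map_add' := hπadd k,
      map_smul' := hπsmul k } with hπdef
  have hπ_same : ∀ m : ℕ, ∀ w ∈ P ^ m, π m w = w := by
    intro m w hw
    show (F w).coeff m = w
    rw [hF m w hw, Polynomial.coeff_C_mul, Polynomial.coeff_X_pow]
    simp
  have hπ_ne : ∀ k m : ℕ, ∀ w ∈ P ^ m, m ≠ k → π k w = 0 := by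
    intro k m w hw hne
    show (F w).coeff k = 0
    rw [hF m w hw, Polynomial.coeff_C_mul, Polynomial.coeff_X_pow, if_neg (by omega)]
    simp
  -- main statement
  intro n hn w hw
  constructor
  · intro hwL
    have hw_span := hL_le_spanE w hwL
    set T : FreeAlgebra ℚ X →ₗ[ℚ] FreeAlgebra ℚ X :=
      δ ∘ₗ π n - (n : ℚ) • π n with hTdef
    have hT : ∀ b ∈ E, T b = 0 := by
      rintro b ⟨hbL, m, hbP, hbδ⟩
      have hTb : T b = δ (π n b) - (n : ℚ) • π n b := by
        rw [hTdef]
        simp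
      by_cases h : m + 1 = n
      · have h1 : π n b = b := by rw [← h]; exact hπ_same (m + 1) b hbP
        rw [hTb, h1, hbδ, ← h]
        push_cast
        module
      · have h0 : π n b = 0 := hπ_ne n (m + 1) b hbP h
        rw [hTb, h0]
        simp
    have hker : Submodule.span ℚ E ≤ LinearMap.ker T :=
      Submodule.span_le.mpr fun b hb => LinearMap.mem_ker.mpr (hT b hb)
    have hTw : T w = 0 := hker hw_span
    have hπw : π n w = w := hπ_same n w hw
    have hfin : δ w - (n : ℚ) • w = 0 := by
      have hTw' : δ (π n w) - (n : ℚ) • π n w = 0 := by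
        rw [hTdef] at hTw
        simpa using hTw
      rwa [hπw] at hTw'
    exact sub_eq_zero.mp hfin
  · intro hδw
    have hwA : w ∈ A := hPn_le_A n hn hw
    have hδwL : δ w ∈ L := hδ_mem_L w hwA
    have hne : (n : ℚ) ≠ 0 := Nat.cast_ne_zero.mpr (by omega)
    have hweq : w = (n : ℚ)⁻¹ • δ w := by
      rw [hδw, smul_smul, inv_mul_cancel₀ hne, one_smul]
    rw [hweq]
    exact L.smul_mem _ hδwL
end
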